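/- arXiv:2405.16407 — 3 statements merged into one kernel-verified Lean document; each statement's English description precedes it below -/
import Mathlib

section
/- Let y ∈ ℝ^{ℕ^n} be a full moment sequence with M(y) positive semidefinite of rank 1 and y_0 = 1. Then there exists v ∈ ℝ^n such that y_α = v^α for all α ∈ ℕ^n. -/
/-- A full moment sequence `y` with `y_0 = 1` whose (infinite) moment matrix
`M(y) = (y_{α+β})` is PSD of rank one (all `2×2` minors vanish and `M(y) ≠ 0`)
is the Dirac moment sequence of some point `v ∈ ℝ^n`. -/
theorem stmt9 (n : ℕ) (y : (Fin n → ℕ) → ℝ) (hy0 : y 0 = 1)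
    (hpsd : ∀ x : (Fin n → ℕ) →₀ ℝ,
      0 ≤ ∑ α ∈ x.support, ∑ β ∈ x.support, x α * y (α + β) * x β)
    (hminor : ∀ α β γ δ : Fin n → ℕ, y (α + β) * y (γ + δ) = y (α + δ) * y (γ + β))
    (hne : ∃ α β : Fin n → ℕ, y (α + β) ≠ 0) :
    ∃ v : Fin n → ℝ, ∀ α : Fin n → ℕ, y α = ∏ i, v i ^ α i := by
  have hmul : ∀ a b : Fin n → ℕ, y (a + b) = y a * y b := by
    intro a b
    have h := hminor a b 0 0
    simpa [hy0] using h
  have hsum : ∀ (s : Finset (Fin n)) (g : Fin n → (Fin n → ℕ)),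
      y (∑ i ∈ s, g i) = ∏ i ∈ s, y (g i) := by
    intro s g
    induction s using Finset.induction with
    | empty => simpa using hy0
    | insert _ _ h ih =>
      rw [Finset.sum_insert h, Finset.prod_insert h, hmul, ih]
  have hpow : ∀ (i : Fin n) (k : ℕ), y (Pi.single i k) = y (Pi.single i 1) ^ k := by
    intro i k
    induction k with
    | zero => simpa using hy0
    | succ m ih =>
      have : (Pi.single i (m + 1) : Fin n → ℕ) = Pi.single i m + Pi.single i 1 :=
        (Pi.single_add (f := fun _ : Fin n => ℕ) i m 1)
      rw [this, hmul, ih, pow_succ]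
  refine ⟨fun i => y (Pi.single i 1), fun α => ?_⟩
  calc y α = y (∑ i, Pi.single i (α i)) := by rw [Finset.univ_sum_single]
    _ = ∏ i, y (Pi.single i (α i)) := hsum _ _
    _ = ∏ i, y (Pi.single i 1) ^ α i := Finset.prod_congr rfl fun i _ => hpow i (α i)
end

section
/- Let m > n and let S_1 = {(A, η) ∈ ℂ^{m×n} × ℂ^m : rank(A|η) ≤ n and rank(A) = n}. The map β: S_1 → ℂ^{m×n} × ℂ^m, (A, η) ↦ (A, p_1(η),...,p_m(η)) restricted to the subset W_1 of S_1 where (A|σ(η)) has rank n+1 for every nonidentity permutation σ, is injective. -/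
/-- The `m × (n+1)` matrix obtained by appending `v` to `A` as a last column. -/
def aug {m n : ℕ} (A : Matrix (Fin m) (Fin n) ℂ) (v : Fin m → ℂ) :
    Matrix (Fin m) (Fin (n + 1)) ℂ :=
  Matrix.of fun i => Fin.snoc (A i) (v i)

open Finset in
lemma newton_eval {m : ℕ} (η : Fin m → ℂ) (k : ℕ) :
    (k : ℂ) * (Multiset.map η Finset.univ.val).esymm k =
      (-1) ^ (k + 1) * ∑ a ∈ (Finset.HasAntidiagonal.antidiagonal k).filter (fun a => a.1 < k),
        (-1) ^ a.1 * (Multiset.map η Finset.univ.val).esymm a.1 * (∑ i, η i ^ a.2) := by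
  have := congrArg (MvPolynomial.aeval η) (MvPolynomial.mul_esymm_eq_sum (Fin m) ℂ k)
  have he : ∀ j, MvPolynomial.eval η (MvPolynomial.esymm (Fin m) ℂ j) =
      (Multiset.map η Finset.univ.val).esymm j :=
    fun j => MvPolynomial.aeval_esymm_eq_multiset_esymm (Fin m) ℂ j η
  simpa [map_sum, MvPolynomial.aeval_esymm_eq_multiset_esymm, MvPolynomial.psum,
    mul_assoc, he] using this

/-- Equal power sums p_1..p_m imply equal multisets. -/
lemma multiset_eq_of_psum_eq {m : ℕ} (η ζ : Fin m → ℂ)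
    (h : ∀ k : Fin m, ∑ i, η i ^ ((k : ℕ) + 1) = ∑ i, ζ i ^ ((k : ℕ) + 1)) :
    Multiset.map η Finset.univ.val = Multiset.map ζ Finset.univ.val := by
  set s : Multiset ℂ := Multiset.map η Finset.univ.val with hs
  set t : Multiset ℂ := Multiset.map ζ Finset.univ.val with ht
  have hp : ∀ j, 1 ≤ j → j ≤ m → (∑ i, η i ^ j) = (∑ i, ζ i ^ j) := by
    intro j hj1 hjm
    have hjf : j - 1 < m := by omega
    have := h ⟨j - 1, hjf⟩
    have hj' : j - 1 + 1 = j := by omega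
    simpa [hj'] using this
  have he : ∀ k, k ≤ m → s.esymm k = t.esymm k := by
    intro k
    induction k using Nat.strong_induction_on with
    | _ k ih =>
      intro hkm
      rcases Nat.eq_zero_or_pos k with rfl | hk0
      · simp [Multiset.esymm]
      have h1 := newton_eval η k
      have h2 := newton_eval ζ k
      rw [← hs] at h1; rw [← ht] at h2
      have hsum : ∑ a ∈ (Finset.HasAntidiagonal.antidiagonal k).filter (fun a => a.1 < k),
            (-1 : ℂ) ^ a.1 * s.esymm a.1 * (∑ i, η i ^ a.2)
          = ∑ a ∈ (Finset.HasAntidiagonal.antidiagonal k).filter (fun a => a.1 < k),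
            (-1 : ℂ) ^ a.1 * t.esymm a.1 * (∑ i, ζ i ^ a.2) := by
        refine Finset.sum_congr rfl ?_
        intro a ha
        simp only [Finset.mem_filter, Finset.HasAntidiagonal.mem_antidiagonal] at ha
        rw [ih a.1 ha.2 (le_trans (le_of_lt ha.2) hkm),
          hp a.2 (by omega) (by omega)]
      have hkC : (k : ℂ) ≠ 0 := Nat.cast_ne_zero.mpr hk0.ne'
      rw [hsum, ← h2] at h1
      exact mul_left_cancel₀ hkC h1
  -- equal char polys
  have hcards : Multiset.card s = m := by simp [hs]
  have hcardt : Multiset.card t = m := by simp [ht]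
  have hprod : (s.map fun a => Polynomial.X - Polynomial.C a).prod
      = (t.map fun a => Polynomial.X - Polynomial.C a).prod := by
    rw [Multiset.prod_X_sub_X_eq_sum_esymm, Multiset.prod_X_sub_X_eq_sum_esymm,
      hcards, hcardt]
    refine Finset.sum_congr rfl ?_
    intro j hj
    rw [he j (by simpa using Nat.lt_succ_iff.mp (Finset.mem_range.mp hj))]
  calc s = (s.map fun a => Polynomial.X - Polynomial.C a).prod.roots := by
            rw [Polynomial.roots_multiset_prod_X_sub_C]
    _ = (t.map fun a => Polynomial.X - Polynomial.C a).prod.roots := by rw [hprod]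
    _ = t := Polynomial.roots_multiset_prod_X_sub_C t

/-- Equal multisets of values give a permutation relating the tuples. -/
lemma exists_perm_of_multiset_eq {m : ℕ} {α : Type*} (η ζ : Fin m → α)
    (h : Multiset.map η Finset.univ.val = Multiset.map ζ Finset.univ.val) :
    ∃ σ : Equiv.Perm (Fin m), ζ = η ∘ σ := by
  classical
  letI : LinearOrder α := IsWellOrder.linearOrder WellOrderingRel
  have hperm : (List.ofFn η).Perm (List.ofFn ζ) := by
    rw [← Multiset.coe_eq_coe]
    simpa [Fin.univ_val_map] using h
  have hmono1 := Tuple.monotone_sort η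
  have hmono2 := Tuple.monotone_sort ζ
  have hperm' : (List.ofFn (η ∘ Tuple.sort η)).Perm (List.ofFn (ζ ∘ Tuple.sort ζ)) := by
    refine ((Equiv.Perm.ofFn_comp_perm (Tuple.sort η) η).trans hperm).trans ?_
    exact (Equiv.Perm.ofFn_comp_perm (Tuple.sort ζ) ζ).symm
  have hsorted1 : (List.ofFn (η ∘ Tuple.sort η)).Pairwise (· ≤ ·) := by
    exact (List.sortedLE_ofFn_iff.mpr hmono1).pairwise
  have hsorted2 : (List.ofFn (ζ ∘ Tuple.sort ζ)).Pairwise (· ≤ ·) := by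
    exact (List.sortedLE_ofFn_iff.mpr hmono2).pairwise
  have heq : List.ofFn (η ∘ Tuple.sort η) = List.ofFn (ζ ∘ Tuple.sort ζ) :=
    List.Perm.eq_of_pairwise' hsorted1 hsorted2 hperm'
  have heqf : η ∘ Tuple.sort η = ζ ∘ Tuple.sort ζ := List.ofFn_injective heq
  refine ⟨(Tuple.sort ζ).symm.trans (Tuple.sort η), ?_⟩
  funext i
  have := congrFun heqf ((Tuple.sort ζ).symm i)
  simpa using this.symm

/-- The map `β : (A, η) ↦ (A, p_1(η), ..., p_m(η))` is injective on the subset `W_1` of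
`S_1 = {(A, η) : rank(A|η) ≤ n, rank A = n}` where `rank (A|σ(η)) = n + 1` for every
nonidentity permutation `σ`. -/
theorem stmt12 (m n : ℕ) (hn : 0 < n) (hm : n < m) :
    Set.InjOn
      (fun p : Matrix (Fin m) (Fin n) ℂ × (Fin m → ℂ) =>
        (p.1, fun k : Fin m => ∑ i, p.2 i ^ ((k : ℕ) + 1)))
      {p : Matrix (Fin m) (Fin n) ℂ × (Fin m → ℂ) |
        (aug p.1 p.2).rank ≤ n ∧ p.1.rank = n ∧
        ∀ σ : Equiv.Perm (Fin m), σ ≠ 1 →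
          (aug p.1 fun i => p.2 (σ i)).rank = n + 1} := by
  rintro ⟨A, η⟩ hp ⟨B, ζ⟩ hq hβ
  simp only [Prod.mk.injEq] at hβ
  obtain ⟨hAB, hpow⟩ := hβ
  subst hAB
  have hpow' : ∀ k : Fin m, ∑ i, η i ^ ((k : ℕ) + 1) = ∑ i, ζ i ^ ((k : ℕ) + 1) :=
    fun k => congrFun hpow k
  obtain ⟨σ, hσ⟩ := exists_perm_of_multiset_eq η ζ (multiset_eq_of_psum_eq η ζ hpow')
  by_cases hσ1 : σ = 1
  · subst hσ1
    simp only [Equiv.Perm.coe_one, Function.comp_id] at hσ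
    subst hσ
    rfl
  · exfalso
    have h3 : (aug A fun i => η (σ i)).rank = n + 1 := hp.2.2 σ hσ1
    have h1 : (aug A ζ).rank ≤ n := hq.1
    have : aug A ζ = aug A fun i => η (σ i) := by
      rw [hσ]; rfl
    rw [this] at h1
    omega
end

section
/- For a generic matrix A* ∈ ℂ^{m×n} with m > n, for any nonidentity permutation σ of {1,...,m} and generic ξ* ∈ ℂ^n, the matrix obtained by appending σ(A*ξ*) as a column to A* has rank n+1; equivalently, σ(A*ξ*) does not lie in the column space of A*. Formally: there is a nonempty Zariski-open subset of ℂ^{m×n} × ℂ^n on which rank(A* | σ(A*ξ*)) = n+1 for all σ ≠ 1. -/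
/-- A subset of `ℂ^ι` is Zariski closed if it is the common zero locus of a set of
polynomials. -/
def IsZClosed {ι : Type} (S : Set (ι → ℂ)) : Prop :=
  ∃ T : Set (MvPolynomial ι ℂ), S = {x | ∀ p ∈ T, MvPolynomial.eval x p = 0}

def IsZOpen {ι : Type} (S : Set (ι → ℂ)) : Prop := IsZClosed Sᶜ

noncomputable section StmtAux

open MvPolynomial Matrix

/-- Polynomial-entried augmented matrix. -/
def Mmat (m n : ℕ) (σ : Equiv.Perm (Fin m)) :
    Matrix (Fin m) (Fin (n + 1)) (MvPolynomial (Fin m × Fin n ⊕ Fin n) ℂ) :=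
  Matrix.of fun i => Fin.snoc (fun j => X (Sum.inl (i, j)))
    (∑ k, X (Sum.inl (σ i, k)) * X (Sum.inr k))

def Pσ (m n : ℕ) (σ : Equiv.Perm (Fin m)) : MvPolynomial (Fin m × Fin n ⊕ Fin n) ℂ :=
  ((Mmat m n σ)ᵀ * Mmat m n σ).det

/-- The matrix appearing in the theorem statement. -/
def Bmat (m n : ℕ) (x : (Fin m × Fin n ⊕ Fin n) → ℂ) (σ : Equiv.Perm (Fin m)) :
    Matrix (Fin m) (Fin (n + 1)) ℂ :=
  aug (Matrix.of fun i j => x (Sum.inl (i, j)))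
    (fun i => (Matrix.of fun i' j => x (Sum.inl (i', j))).mulVec
      (fun j => x (Sum.inr j)) (σ i))

lemma map_Mmat (m n : ℕ) (σ : Equiv.Perm (Fin m)) (x : (Fin m × Fin n ⊕ Fin n) → ℂ) :
    (Mmat m n σ).map (eval x) = Bmat m n x σ := by
  ext i j
  refine Fin.lastCases ?_ ?_ j
  · simp [Mmat, Bmat, aug, Matrix.mulVec, dotProduct]
  · intro j'
    simp [Mmat, Bmat, aug]

lemma eval_Pσ (m n : ℕ) (σ : Equiv.Perm (Fin m)) (x : (Fin m × Fin n ⊕ Fin n) → ℂ) :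
    eval x (Pσ m n σ) = ((Bmat m n x σ)ᵀ * Bmat m n x σ).det := by
  rw [Pσ, RingHom.map_det]
  show ((((Mmat m n σ)ᵀ * Mmat m n σ)).map (eval x)).det = _
  rw [Matrix.map_mul, Matrix.transpose_map, map_Mmat]

lemma rank_of_det_ne {m n : ℕ} (B : Matrix (Fin m) (Fin (n + 1)) ℂ)
    (h : (Bᵀ * B).det ≠ 0) : B.rank = n + 1 := by
  have h1 : (Bᵀ * B).rank = n + 1 := by
    rw [Matrix.rank_of_isUnit _ ((Matrix.isUnit_iff_isUnit_det _).mpr (isUnit_iff_ne_zero.mpr h))]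
    simp
  have h2 := Matrix.rank_mul_le_right Bᵀ B
  have h3 := Matrix.rank_le_width B
  omega

lemma witness (m n : ℕ) (hn : 0 < n) (hm : n < m) (σ : Equiv.Perm (Fin m)) (hσ : σ ≠ 1) :
    ∃ x : (Fin m × Fin n ⊕ Fin n) → ℂ, eval x (Pσ m n σ) = 1 := by
  obtain ⟨i₀, hi₀⟩ : ∃ i, σ i ≠ i := by
    by_contra h
    push_neg at h
    exact hσ (Equiv.ext h)
  have hm' : n + 1 ≤ m := hm
  set a : Fin m := ⟨0, by omega⟩ with ha
  set b : Fin m := ⟨n, hm⟩ with hb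
  have hab : a ≠ b := by simp [ha, hb, Fin.ext_iff]; omega
  set c : Fin m := Equiv.swap a (σ i₀) b with hcdef
  have hc : c ≠ σ i₀ := by
    intro h
    exact hab ((Equiv.swap a (σ i₀)).injective
      (h.trans (Equiv.swap_apply_left a (σ i₀)).symm)).symm
  set π : Equiv.Perm (Fin m) := (Equiv.swap c i₀) * (Equiv.swap a (σ i₀)) with hπ
  have hπa : π a = σ i₀ := by
    rw [hπ]
    simp only [Equiv.Perm.mul_apply, Equiv.swap_apply_left]
    exact Equiv.swap_apply_of_ne_of_ne hc.symm hi₀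
  have hπb : π b = i₀ := by
    rw [hπ]
    simp only [Equiv.Perm.mul_apply, ← hcdef, Equiv.swap_apply_left]
  set G : Fin (n + 1) → Fin m := fun j => π (Fin.castLE hm' j) with hG
  have hGinj : Function.Injective G :=
    π.injective.comp (Fin.castLE_injective hm')
  have hGlast : G (Fin.last n) = i₀ := by
    have : Fin.castLE hm' (Fin.last n) = b := by simp [hb, Fin.ext_iff]
    rw [hG]; simp only [this, hπb]
  set k0 : Fin n := ⟨0, hn⟩ with hk0
  have hG0 : G (Fin.castSucc k0) = σ i₀ := by
    have : Fin.castLE hm' (Fin.castSucc k0) = a := by simp [ha, hk0, Fin.ext_iff]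
    rw [hG]; simp only [this, hπa]
  set x : (Fin m × Fin n ⊕ Fin n) → ℂ := fun t =>
    match t with
    | Sum.inl (i, j) => if i = G j.castSucc then 1 else 0
    | Sum.inr k => if k = k0 then 1 else 0 with hx
  have hB : Bmat m n x σ = Matrix.of (fun i j => if i = G j then 1 else 0) := by
    ext i j
    rw [Bmat]
    refine Fin.lastCases ?_ ?_ j
    · show aug (Matrix.of fun i j => x (Sum.inl (i, j)))
        (fun i => (Matrix.of fun i' j => x (Sum.inl (i', j))).mulVec
          (fun j => x (Sum.inr j)) (σ i)) i (Fin.last n)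
        = if i = G (Fin.last n) then 1 else 0
      rw [aug]
      simp only [Matrix.of_apply, Fin.snoc_last]
      simp only [Matrix.mulVec, dotProduct, Matrix.of_apply, hx]
      rw [Finset.sum_eq_single k0]
      · rw [hG0, hGlast]
        by_cases h : i = i₀
        · subst h; simp
        · rw [if_neg (fun hh => h (σ.injective hh)), if_neg h, zero_mul]
      · intro k _ hk
        simp [hk]
      · simp
    · intro j'
      show aug (Matrix.of fun i j => x (Sum.inl (i, j)))
        (fun i => (Matrix.of fun i' j => x (Sum.inl (i', j))).mulVec
          (fun j => x (Sum.inr j)) (σ i)) i j'.castSucc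
        = if i = G j'.castSucc then 1 else 0
      rw [aug]
      simp only [Matrix.of_apply, Fin.snoc_castSucc]
      rfl
  have hone : (Matrix.of (fun i j => if i = G j then (1 : ℂ) else 0))ᵀ
      * Matrix.of (fun i j => if i = G j then (1 : ℂ) else 0) = 1 := by
    ext j k
    simp only [Matrix.mul_apply, Matrix.transpose_apply, Matrix.of_apply, Matrix.one_apply,
      ite_mul, one_mul, zero_mul]
    rw [Finset.sum_eq_single (G j)]
    · rw [if_pos rfl]
      by_cases h : j = k
      · subst h; simp
      · rw [if_neg (fun hh => h (hGinj hh)), if_neg h]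
    · intro i _ hi
      rw [if_neg hi]
    · simp
  exact ⟨x, by rw [eval_Pσ, hB, hone, Matrix.det_one]⟩

end StmtAux

open MvPolynomial in
/-- For generic `(A, ξ) ∈ ℂ^{m×n} × ℂ^n` (a nonempty Zariski-open set, with the product
space encoded as a function space) and every nonidentity permutation `σ`,
the matrix `(A | σ(Aξ))` has rank `n + 1`. -/
theorem stmt18 (m n : ℕ) (hn : 0 < n) (hm : n < m) :
    ∃ U : Set ((Fin m × Fin n ⊕ Fin n) → ℂ), IsZOpen U ∧ U.Nonempty ∧
      ∀ x ∈ U, ∀ σ : Equiv.Perm (Fin m), σ ≠ 1 →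
        (aug (Matrix.of fun i j => x (Sum.inl (i, j)))
          (fun i => (Matrix.of fun i' j => x (Sum.inl (i', j))).mulVec
            (fun j => x (Sum.inr j)) (σ i))).rank = n + 1 := by
  classical
  set P : MvPolynomial (Fin m × Fin n ⊕ Fin n) ℂ :=
    ∏ σ ∈ Finset.univ.filter (fun σ : Equiv.Perm (Fin m) => σ ≠ 1), Pσ m n σ with hP
  have hfac : ∀ σ ∈ Finset.univ.filter (fun σ : Equiv.Perm (Fin m) => σ ≠ 1),
      Pσ m n σ ≠ 0 := by
    intro σ hσ h0
    obtain ⟨x, hx⟩ := witness m n hn hm σ (Finset.mem_filter.mp hσ).2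
    rw [h0] at hx
    simp at hx
  have hPne : P ≠ 0 := Finset.prod_ne_zero_iff.mpr hfac
  have hx0 : ∃ x0, eval x0 P ≠ 0 := by
    by_contra h
    push_neg at h
    exact hPne (MvPolynomial.funext (fun x => by rw [h x, map_zero]))
  obtain ⟨x0, hx0⟩ := hx0
  refine ⟨{x | eval x P ≠ 0}, ⟨{P}, ?_⟩, ⟨x0, hx0⟩, ?_⟩
  · ext x
    simp
  · intro x hx σ hσ
    show (Bmat m n x σ).rank = n + 1
    apply rank_of_det_ne
    rw [← eval_Pσ]
    intro h0
    apply hx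
    show eval x P = 0
    rw [hP, map_prod]
    exact Finset.prod_eq_zero (Finset.mem_filter.mpr ⟨Finset.mem_univ σ, hσ⟩) h0
end
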